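/- Consider the Giraud-type cover for 5-uniform hypergraphs: let G be a finite 5-uniform hypergraph, (V_0, V_1) a partition of V(G), and f : V_0 × V_1 → {0,1} any function. Define C to consist of all 4-subsets σ of edges of G such that either σ ⊆ V_0 or σ ⊆ V_1, or |σ ∩ V_0| = |σ ∩ V_1| = 2 and Σ_{(x,y) ∈ (σ∩V_0)×(σ∩V_1)} f(x,y) is even. Then C is a 4-cover of G: every edge of G contains a member of C. -/

import Mathlib

lemma three_zmod2 : ∀ a b c : ZMod 2, a = b ∨ a = c ∨ b = c := by decide

lemma split_inter {V : Type*} [DecidableEq V] {V0 V1 : Finset V} (hdisj : Disjoint V0 V1)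
    {S T : Finset V} (hS : S ⊆ V0) (hT : T ⊆ V1) :
    (S ∪ T) ∩ V0 = S ∧ (S ∪ T) ∩ V1 = T := by
  constructor
  · rw [Finset.union_inter_distrib_right, Finset.inter_eq_left.mpr hS,
      Finset.disjoint_iff_inter_eq_empty.mp (hdisj.symm.mono_left hT),
      Finset.union_empty]
  · rw [Finset.union_inter_distrib_right, Finset.inter_eq_left.mpr hT,
      Finset.disjoint_iff_inter_eq_empty.mp (hdisj.mono_left hS),
      Finset.empty_union]

theorem stmt18 {V : Type*} [DecidableEq V] (G : Finset (Finset V))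
    (hG : ∀ e ∈ G, e.card = 5) (V0 V1 : Finset V) (hdisj : Disjoint V0 V1)
    (hcov : ∀ e ∈ G, e ⊆ V0 ∪ V1) (f : V → V → ZMod 2) :
    ∀ e ∈ G, ∃ σ ⊆ e, σ.card = 4 ∧
      (σ ⊆ V0 ∨ σ ⊆ V1 ∨
        ((σ ∩ V0).card = 2 ∧ (σ ∩ V1).card = 2 ∧
          ∑ x ∈ σ ∩ V0, ∑ y ∈ σ ∩ V1, f x y = 0)) := by
  intro e he
  set A := e ∩ V0 with hAdef
  set B := e ∩ V1 with hBdef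
  have hAV0 : A ⊆ V0 := Finset.inter_subset_right
  have hBV1 : B ⊆ V1 := Finset.inter_subset_right
  have hAe : A ⊆ e := Finset.inter_subset_left
  have hBe : B ⊆ e := Finset.inter_subset_left
  have hdAB : Disjoint A B := hdisj.mono hAV0 hBV1
  have hunion : A ∪ B = e := by
    rw [hAdef, hBdef, ← Finset.inter_union_distrib_left]
    exact Finset.inter_eq_left.mpr (hcov e he)
  have hcard : A.card + B.card = 5 := by
    rw [← Finset.card_union_of_disjoint hdAB, hunion, hG e he]
  by_cases hB4 : 4 ≤ B.card
  · obtain ⟨σ, hσB, hσc⟩ := Finset.exists_subset_card_eq hB4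
    exact ⟨σ, hσB.trans hBe, hσc, Or.inr (Or.inl (hσB.trans hBV1))⟩
  by_cases hA4 : 4 ≤ A.card
  · obtain ⟨σ, hσA, hσc⟩ := Finset.exists_subset_card_eq hA4
    exact ⟨σ, hσA.trans hAe, hσc, Or.inl (hσA.trans hAV0)⟩
  push_neg at hB4 hA4
  have hAcases : A.card = 2 ∧ B.card = 3 ∨ A.card = 3 ∧ B.card = 2 := by omega
  rcases hAcases with ⟨hA2, hB3⟩ | ⟨hA3, hB2⟩
  · -- |A| = 2, |B| = 3
    obtain ⟨y1, y2, y3, h12, h13, h23, hBeq⟩ := Finset.card_eq_three.mp hB3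
    have hy1 : y1 ∈ B := by rw [hBeq]; simp
    have hy2 : y2 ∈ B := by rw [hBeq]; simp
    have hy3 : y3 ∈ B := by rw [hBeq]; simp
    have key : ∀ ya yb : V, ya ∈ B → yb ∈ B → ya ≠ yb →
        (∑ x ∈ A, f x ya = ∑ x ∈ A, f x yb) →
        ∃ σ ⊆ e, σ.card = 4 ∧ (σ ⊆ V0 ∨ σ ⊆ V1 ∨
          ((σ ∩ V0).card = 2 ∧ (σ ∩ V1).card = 2 ∧
            ∑ x ∈ σ ∩ V0, ∑ y ∈ σ ∩ V1, f x y = 0)) := by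
      intro ya yb hya hyb hne hS
      have hpair : ({ya, yb} : Finset V) ⊆ V1 := by
        intro z hz; simp at hz
        rcases hz with h | h <;> subst h
        · exact hBV1 hya
        · exact hBV1 hyb
      obtain ⟨hI0, hI1⟩ := split_inter hdisj hAV0 hpair
      refine ⟨A ∪ {ya, yb}, ?_, ?_, Or.inr (Or.inr ⟨?_, ?_, ?_⟩)⟩
      · refine Finset.union_subset hAe ?_
        intro z hz; simp at hz
        rcases hz with h | h <;> subst h
        · exact hBe hya
        · exact hBe hyb
      · rw [Finset.card_union_of_disjoint (hdisj.mono hAV0 hpair), hA2,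
          Finset.card_pair hne]
      · rw [hI0]; exact hA2
      · rw [hI1]; exact Finset.card_pair hne
      · rw [hI0, hI1]
        have h : ∀ x ∈ A, ∑ y ∈ ({ya, yb} : Finset V), f x y = f x ya + f x yb :=
          fun x _ => Finset.sum_pair hne
        rw [Finset.sum_congr rfl h, Finset.sum_add_distrib, hS]
        exact CharTwo.add_self_eq_zero _
    rcases three_zmod2 (∑ x ∈ A, f x y1) (∑ x ∈ A, f x y2) (∑ x ∈ A, f x y3) with h | h | h
    · exact key y1 y2 hy1 hy2 h12 h
    · exact key y1 y3 hy1 hy3 h13 h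
    · exact key y2 y3 hy2 hy3 h23 h
  · -- |A| = 3, |B| = 2
    obtain ⟨x1, x2, x3, h12, h13, h23, hAeq⟩ := Finset.card_eq_three.mp hA3
    have hx1 : x1 ∈ A := by rw [hAeq]; simp
    have hx2 : x2 ∈ A := by rw [hAeq]; simp
    have hx3 : x3 ∈ A := by rw [hAeq]; simp
    have key : ∀ xa xb : V, xa ∈ A → xb ∈ A → xa ≠ xb →
        (∑ y ∈ B, f xa y = ∑ y ∈ B, f xb y) →
        ∃ σ ⊆ e, σ.card = 4 ∧ (σ ⊆ V0 ∨ σ ⊆ V1 ∨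
          ((σ ∩ V0).card = 2 ∧ (σ ∩ V1).card = 2 ∧
            ∑ x ∈ σ ∩ V0, ∑ y ∈ σ ∩ V1, f x y = 0)) := by
      intro xa xb hxa hxb hne hS
      have hpair : ({xa, xb} : Finset V) ⊆ V0 := by
        intro z hz; simp at hz
        rcases hz with h | h <;> subst h
        · exact hAV0 hxa
        · exact hAV0 hxb
      obtain ⟨hI0, hI1⟩ := split_inter hdisj hpair hBV1
      refine ⟨{xa, xb} ∪ B, ?_, ?_, Or.inr (Or.inr ⟨?_, ?_, ?_⟩)⟩
      · refine Finset.union_subset ?_ hBe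
        intro z hz; simp at hz
        rcases hz with h | h <;> subst h
        · exact hAe hxa
        · exact hAe hxb
      · rw [Finset.card_union_of_disjoint (hdisj.mono hpair hBV1),
          Finset.card_pair hne, hB2]
      · rw [hI0]; exact Finset.card_pair hne
      · rw [hI1]; exact hB2
      · rw [hI0, hI1, Finset.sum_pair hne, hS]
        exact CharTwo.add_self_eq_zero _
    rcases three_zmod2 (∑ y ∈ B, f x1 y) (∑ y ∈ B, f x2 y) (∑ y ∈ B, f x3 y) with h | h | h
    · exact key x1 x2 hx1 hx2 h12 h
    · exact key x1 x3 hx1 hx3 h13 h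
    · exact key x2 x3 hx2 hx3 h23 h
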